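/- Suppose φ is an efficient, strategy-proof, non-bossy, and normalized-cone-continuous rule on three agents and three objects. Let u be a profile where agents i ≠ j have the same induced strict order with u_i(a) > u_i(b) > u_i(c), and let u_i' be any no-ties utility with the same strict order as u_i. If φ_{ib}(u) + φ_{jb}(u) > 0, then φ(u_i', u_{-i}) = φ(u), and moreover φ_i(u), φ_j(u) ∈ [a,b] ∪ [b,c]. -/

import Mathlib

open Finset Filter Topology

/-- No ties on degenerate lotteries. -/
def NoTies (u : Fin 3 → ℝ) : Prop := ∀ x y : Fin 3, x ≠ y → u x ≠ u y

/-- A lottery over three objects. -/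
def IsLottery (π : Fin 3 → ℝ) : Prop := (∀ x, 0 ≤ π x) ∧ ∑ x, π x = 1

/-- A 3×3 bistochastic matrix (rows = agents, columns = objects). -/
def Bistochastic (π : Fin 3 → Fin 3 → ℝ) : Prop :=
  (∀ i x, 0 ≤ π i x) ∧ (∀ i, ∑ x, π i x = 1) ∧ (∀ x, ∑ i, π i x = 1)

/-- Expected utility of lottery `π` under Bernoulli utility `u`. -/
def EU (u π : Fin 3 → ℝ) : ℝ := ∑ x, u x * π x

/-- `u` and `v` induce the same strict order on objects. -/
def SameOrder (u v : Fin 3 → ℝ) : Prop := ∀ x y : Fin 3, u x > u y ↔ v x > v y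

def NoTiesProfile (u : Fin 3 → Fin 3 → ℝ) : Prop := ∀ i, NoTies (u i)

/-- Utilities normalized to sum to one. -/
def Normalized (u : Fin 3 → ℝ) : Prop := ∑ x, u x = 1

/-- Rate of middle substitution, for `u a > u b > u c`. -/
noncomputable def mu (u : Fin 3 → ℝ) (a b c : Fin 3) : ℝ := (u b - u c) / (u a - u c)

/-- Effectively the same: same strict order and same rate of middle substitution. -/
def EffSame (u v : Fin 3 → ℝ) : Prop :=
  SameOrder u v ∧ ∀ a b c : Fin 3, u a > u b → u b > u c → mu u a b c = mu v a b c

/-- The rule maps (no-ties) profiles to bistochastic matrices. -/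
def BistochasticValued (φ : (Fin 3 → Fin 3 → ℝ) → Fin 3 → Fin 3 → ℝ) : Prop :=
  ∀ u, NoTiesProfile u → Bistochastic (φ u)

def StrategyProof (φ : (Fin 3 → Fin 3 → ℝ) → Fin 3 → Fin 3 → ℝ) : Prop :=
  ∀ u i ui', NoTiesProfile u → NoTies ui' →
    EU (u i) (φ u i) ≥ EU (u i) (φ (Function.update u i ui') i)

def NonBossy (φ : (Fin 3 → Fin 3 → ℝ) → Fin 3 → Fin 3 → ℝ) : Prop :=
  ∀ u i ui', NoTiesProfile u → NoTies ui' →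
    φ u i = φ (Function.update u i ui') i → φ u = φ (Function.update u i ui')

/-- `π'` Pareto-dominates `π` at `u` in expected utility. -/
def Dominates (u π' π : Fin 3 → Fin 3 → ℝ) : Prop :=
  (∀ j, EU (u j) (π' j) ≥ EU (u j) (π j)) ∧ ∃ i, EU (u i) (π' i) > EU (u i) (π i)

def Efficient (φ : (Fin 3 → Fin 3 → ℝ) → Fin 3 → Fin 3 → ℝ) : Prop :=
  ∀ u, NoTiesProfile u → ¬ ∃ π', Bistochastic π' ∧ Dominates u π' (φ u)

/-- Normalized-cone-continuity. -/
def NCContinuous (φ : (Fin 3 → Fin 3 → ℝ) → Fin 3 → Fin 3 → ℝ) : Prop :=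
  ∀ (u : Fin 3 → Fin 3 → ℝ) (i : Fin 3) (us : ℕ → Fin 3 → ℝ),
    NoTiesProfile u → Normalized (u i) →
    (∀ k, NoTies (us k) ∧ Normalized (us k)) →
    Tendsto us atTop (nhds (u i)) →
    Tendsto (fun k => φ (Function.update u i (us k))) atTop (nhds (φ u))

set_option maxHeartbeats 1000000

noncomputable section
namespace S8

/-! ### Basic object enumeration -/

lemma obj_cases {a b c : Fin 3} (hab : a ≠ b) (hac : a ≠ c) (hbc : b ≠ c) (x : Fin 3) :
    x = a ∨ x = b ∨ x = c := by
  have h1 := a.isLt; have h2 := b.isLt; have h3 := c.isLt; have h4 := x.isLt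
  have e1 : a.val ≠ b.val := fun h => hab (Fin.ext h)
  have e2 : a.val ≠ c.val := fun h => hac (Fin.ext h)
  have e3 : b.val ≠ c.val := fun h => hbc (Fin.ext h)
  have : x.val = a.val ∨ x.val = b.val ∨ x.val = c.val := by omega
  rcases this with h | h | h
  · exact Or.inl (Fin.ext h)
  · exact Or.inr (Or.inl (Fin.ext h))
  · exact Or.inr (Or.inr (Fin.ext h))

lemma sum_obj {a b c : Fin 3} (hab : a ≠ b) (hac : a ≠ c) (hbc : b ≠ c) (f : Fin 3 → ℝ) :
    ∑ x, f x = f a + f b + f c := by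
  have huniv : (Finset.univ : Finset (Fin 3)) = {a, b, c} := by
    symm
    apply Finset.eq_univ_iff_forall.mpr
    intro x
    rcases obj_cases hab hac hbc x with rfl | rfl | rfl <;> simp
  rw [huniv]
  rw [Finset.sum_insert (by simp [hab, hac]), Finset.sum_pair hbc]
  ring

/-! ### Rated utilities and the canonical normalized family -/

def Rated (a b c : Fin 3) (u : Fin 3 → ℝ) (θ : ℝ) : Prop :=
  u b < u a ∧ u c < u b ∧ u b - u c = θ * (u a - u c)

def vv (a b c : Fin 3) (t : ℝ) : Fin 3 → ℝ :=
  fun x => if x = a then 1 - t/3 else if x = b then 2*t/3 else -(t/3)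

lemma vv_a {a b c : Fin 3} (t : ℝ) : vv a b c t a = 1 - t/3 := by simp [vv]

lemma vv_b {a b c : Fin 3} (hab : a ≠ b) (t : ℝ) : vv a b c t b = 2*t/3 := by
  simp [vv, Ne.symm hab]

lemma vv_c {a b c : Fin 3} (hac : a ≠ c) (hbc : b ≠ c) (t : ℝ) : vv a b c t c = -(t/3) := by
  simp [vv, Ne.symm hac, Ne.symm hbc]

lemma vv_rated {a b c : Fin 3} (hab : a ≠ b) (hac : a ≠ c) (hbc : b ≠ c)
    {t : ℝ} (h0 : 0 < t) (h1 : t < 1) : Rated a b c (vv a b c t) t := by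
  refine ⟨?_, ?_, ?_⟩ <;>
    simp only [vv_a, vv_b hab, vv_c hac hbc]
  · linarith
  · linarith
  · ring

lemma vv_noties {a b c : Fin 3} (hab : a ≠ b) (hac : a ≠ c) (hbc : b ≠ c)
    {t : ℝ} (h0 : 0 < t) (h1 : t < 1) : NoTies (vv a b c t) := by
  have v1 := vv_a (a := a) (b := b) (c := c) t
  have v2 := vv_b (a := a) (c := c) hab t
  have v3 := vv_c (a := a) hac hbc t
  intro x y hxy
  rcases obj_cases hab hac hbc x with rfl | rfl | rfl <;>
    rcases obj_cases hab hac hbc y with rfl | rfl | rfl <;>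
      first
        | exact absurd rfl hxy
        | (rw [v1, v2]; intro h; linarith)
        | (rw [v1, v3]; intro h; linarith)
        | (rw [v2, v3]; intro h; linarith)
        | (rw [v2, v1]; intro h; linarith)
        | (rw [v3, v1]; intro h; linarith)
        | (rw [v3, v2]; intro h; linarith)

lemma vv_normalized {a b c : Fin 3} (hab : a ≠ b) (hac : a ≠ c) (hbc : b ≠ c)
    (t : ℝ) : Normalized (vv a b c t) := by
  unfold Normalized
  rw [sum_obj hab hac hbc, vv_a, vv_b hab, vv_c hac hbc]
  ring

lemma rated_bounds {a b c : Fin 3} {u : Fin 3 → ℝ} {θ : ℝ}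
    (hr : Rated a b c u θ) : 0 < θ ∧ θ < 1 := by
  obtain ⟨h1, h2, h3⟩ := hr
  have hca : u c < u a := lt_trans h2 h1
  constructor <;> nlinarith

lemma rated_of_order {a b c : Fin 3} {u : Fin 3 → ℝ}
    (h1 : u b < u a) (h2 : u c < u b) :
    Rated a b c u ((u b - u c) / (u a - u c)) := by
  refine ⟨h1, h2, ?_⟩
  have : u a - u c ≠ 0 := by
    have : u c < u a := lt_trans h2 h1
    linarith
  field_simp

/-! ### Profile helpers -/

lemma noties_update {u : Fin 3 → Fin 3 → ℝ} (hu : NoTiesProfile u)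
    {h : Fin 3} {w : Fin 3 → ℝ} (hw : NoTies w) :
    NoTiesProfile (Function.update u h w) := by
  intro g
  rcases eq_or_ne g h with rfl | hg
  · simpa using hw
  · simpa [Function.update_apply, hg] using hu g

end S8
end
noncomputable section
namespace S8

section Core

variable {φ : (Fin 3 → Fin 3 → ℝ) → Fin 3 → Fin 3 → ℝ}
variable {a b c : Fin 3}

lemma lot_nonneg (hB : BistochasticValued φ) {Q} (hQ : NoTiesProfile Q) (g x : Fin 3) :
    0 ≤ φ Q g x := (hB Q hQ).1 g x

lemma lot_sum (hB : BistochasticValued φ) (hab : a ≠ b) (hac : a ≠ c) (hbc : b ≠ c)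
    {Q} (hQ : NoTiesProfile Q) (g : Fin 3) :
    φ Q g a + φ Q g b + φ Q g c = 1 := by
  have hs := (hB Q hQ).2.1 g
  rw [sum_obj hab hac hbc] at hs
  exact hs

lemma col_pair (hB : BistochasticValued φ) {Q} (hQ : NoTiesProfile Q)
    {h l : Fin 3} (hhl : h ≠ l) (x : Fin 3) :
    φ Q h x + φ Q l x ≤ 1 := by
  have hsum := (hB Q hQ).2.2 x
  have h1 : φ Q h x + φ Q l x = ∑ g ∈ ({h, l} : Finset (Fin 3)), φ Q g x := by
    rw [Finset.sum_pair hhl]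
  rw [h1, ← hsum]
  exact Finset.sum_le_sum_of_subset_of_nonneg (Finset.subset_univ _)
    (fun g _ _ => (hB Q hQ).1 g x)

lemma eu_eq_score (hab : a ≠ b) (hac : a ≠ c) (hbc : b ≠ c)
    {w π : Fin 3 → ℝ} {θ : ℝ} (hr : Rated a b c w θ)
    (hπ : π a + π b + π c = 1) :
    EU w π = (w a - w c) * (π a + θ * π b) + w c := by
  unfold EU
  rw [sum_obj hab hac hbc]
  have h3 := hr.2.2
  linear_combination π b * h3 + w c * hπ

lemma eu_add (w p q : Fin 3 → ℝ) :
    EU w (fun x => p x + q x) = EU w p + ∑ x, w x * q x := by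
  unfold EU
  rw [← Finset.sum_add_distrib]
  apply Finset.sum_congr rfl
  intros
  ring

lemma sp_score (hB : BistochasticValued φ) (hSP : StrategyProof φ)
    (hab : a ≠ b) (hac : a ≠ c) (hbc : b ≠ c)
    {Q} (hQ : NoTiesProfile Q) {h : Fin 3} {θ : ℝ}
    (hr : Rated a b c (Q h) θ) {z : Fin 3 → ℝ} (hz : NoTies z) :
    φ (Function.update Q h z) h a + θ * φ (Function.update Q h z) h b
      ≤ φ Q h a + θ * φ Q h b := by
  have hsp := hSP Q h z hQ hz
  rw [eu_eq_score hab hac hbc hr (lot_sum hB hab hac hbc hQ h),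
      eu_eq_score hab hac hbc hr (lot_sum hB hab hac hbc (noties_update hQ hz) h)] at hsp
  have hpos : 0 < Q h a - Q h c := by
    have := hr.1; have := hr.2.1; linarith
  nlinarith [hsp]

lemma sp_pairs (hB : BistochasticValued φ) (hSP : StrategyProof φ)
    (hab : a ≠ b) (hac : a ≠ c) (hbc : b ≠ c)
    {Q} (hQ : NoTiesProfile Q) (h : Fin 3)
    {z1 z2 : Fin 3 → ℝ} {θ1 : ℝ}
    (hr1 : Rated a b c z1 θ1)
    (hz1 : NoTies z1) (hz2 : NoTies z2) :
    φ (Function.update Q h z2) h a + θ1 * φ (Function.update Q h z2) h b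
      ≤ φ (Function.update Q h z1) h a + θ1 * φ (Function.update Q h z1) h b := by
  have hidem : Function.update (Function.update Q h z1) h z2 = Function.update Q h z2 :=
    Function.update_idem ..
  have hr1' : Rated a b c ((Function.update Q h z1) h) θ1 := by
    rwa [Function.update_self]
  have := sp_score hB hSP hab hac hbc (noties_update hQ hz1) hr1' hz2
  rwa [hidem] at this

lemma mono_b (hB : BistochasticValued φ) (hSP : StrategyProof φ)
    (hab : a ≠ b) (hac : a ≠ c) (hbc : b ≠ c)
    {Q} (hQ : NoTiesProfile Q) (h : Fin 3)
    {z1 z2 : Fin 3 → ℝ} {θ1 θ2 : ℝ}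
    (hr1 : Rated a b c z1 θ1) (hr2 : Rated a b c z2 θ2)
    (hz1 : NoTies z1) (hz2 : NoTies z2) (hlt : θ1 < θ2) :
    φ (Function.update Q h z1) h b ≤ φ (Function.update Q h z2) h b := by
  have A := sp_pairs hB hSP hab hac hbc hQ h hr1 hz1 hz2
  have B := sp_pairs hB hSP hab hac hbc hQ h hr2 hz2 hz1
  nlinarith [A, B]

lemma pair_of_b (hB : BistochasticValued φ) (hSP : StrategyProof φ) (hNB : NonBossy φ)
    (hab : a ≠ b) (hac : a ≠ c) (hbc : b ≠ c)
    {Q} (hQ : NoTiesProfile Q) (h : Fin 3)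
    {z1 z2 : Fin 3 → ℝ} {θ1 θ2 : ℝ}
    (hr1 : Rated a b c z1 θ1) (hr2 : Rated a b c z2 θ2)
    (hz1 : NoTies z1) (hz2 : NoTies z2)
    (hbb : φ (Function.update Q h z1) h b = φ (Function.update Q h z2) h b) :
    φ (Function.update Q h z1) = φ (Function.update Q h z2) := by
  have A := sp_pairs hB hSP hab hac hbc hQ h hr1 hz1 hz2
  have B := sp_pairs hB hSP hab hac hbc hQ h hr2 hz2 hz1
  rw [hbb] at A B
  have haa : φ (Function.update Q h z1) h a = φ (Function.update Q h z2) h a := by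
    linarith
  have s1 := lot_sum hB hab hac hbc (Q := Function.update Q h z1) (noties_update (h := h) hQ hz1) h
  have s2 := lot_sum hB hab hac hbc (Q := Function.update Q h z2) (noties_update (h := h) hQ hz2) h
  have hcc : φ (Function.update Q h z1) h c = φ (Function.update Q h z2) h c := by
    linarith
  have hfun : φ (Function.update Q h z1) h = φ (Function.update Q h z2) h := by
    funext x
    rcases obj_cases hab hac hbc x with rfl | rfl | rfl
    exacts [haa, hbb, hcc]
  have hidem : Function.update (Function.update Q h z1) h z2 = Function.update Q h z2 :=
    Function.update_idem ..
  have hnb := hNB (Function.update Q h z1) h z2 (noties_update hQ hz1) hz2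
    (by rw [hfun, hidem])
  rwa [hidem] at hnb

lemma pair_of_a (hB : BistochasticValued φ) (hSP : StrategyProof φ) (hNB : NonBossy φ)
    (hab : a ≠ b) (hac : a ≠ c) (hbc : b ≠ c)
    {Q} (hQ : NoTiesProfile Q) (h : Fin 3)
    {z1 z2 : Fin 3 → ℝ} {θ1 θ2 : ℝ}
    (hr1 : Rated a b c z1 θ1) (hr2 : Rated a b c z2 θ2)
    (hz1 : NoTies z1) (hz2 : NoTies z2)
    (ha1 : φ (Function.update Q h z1) h a = 0)
    (ha2 : φ (Function.update Q h z2) h a = 0) :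
    φ (Function.update Q h z1) = φ (Function.update Q h z2) := by
  have A := sp_pairs hB hSP hab hac hbc hQ h hr1 hz1 hz2
  have B := sp_pairs hB hSP hab hac hbc hQ h hr2 hz2 hz1
  rw [ha1, ha2] at A B
  have hθ1 := (rated_bounds hr1).1
  have hθ2 := (rated_bounds hr2).1
  have hbb : φ (Function.update Q h z1) h b = φ (Function.update Q h z2) h b := by
    nlinarith [A, B]
  exact pair_of_b hB hSP hNB hab hac hbc hQ h hr1 hr2 hz1 hz2 hbb

lemma pair_of_c (hB : BistochasticValued φ) (hSP : StrategyProof φ) (hNB : NonBossy φ)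
    (hab : a ≠ b) (hac : a ≠ c) (hbc : b ≠ c)
    {Q} (hQ : NoTiesProfile Q) (h : Fin 3)
    {z1 z2 : Fin 3 → ℝ} {θ1 θ2 : ℝ}
    (hr1 : Rated a b c z1 θ1) (hr2 : Rated a b c z2 θ2)
    (hz1 : NoTies z1) (hz2 : NoTies z2)
    (hc1 : φ (Function.update Q h z1) h c = 0)
    (hc2 : φ (Function.update Q h z2) h c = 0) :
    φ (Function.update Q h z1) = φ (Function.update Q h z2) := by
  have A := sp_pairs hB hSP hab hac hbc hQ h hr1 hz1 hz2
  have B := sp_pairs hB hSP hab hac hbc hQ h hr2 hz2 hz1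
  have hθ1 := (rated_bounds hr1).2
  have hθ2 := (rated_bounds hr2).2
  have s1 := lot_sum hB hab hac hbc (Q := Function.update Q h z1) (noties_update (h := h) hQ hz1) h
  have s2 := lot_sum hB hab hac hbc (Q := Function.update Q h z2) (noties_update (h := h) hQ hz2) h
  rw [hc1] at s1
  rw [hc2] at s2
  have hbb : φ (Function.update Q h z1) h b = φ (Function.update Q h z2) h b := by
    nlinarith [A, B]
  exact pair_of_b hB hSP hNB hab hac hbc hQ h hr1 hr2 hz1 hz2 hbb

end Core
end S8
end
noncomputable section
namespace S8

section Cont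

open Filter Topology

variable {φ : (Fin 3 → Fin 3 → ℝ) → Fin 3 → Fin 3 → ℝ}
variable {a b c : Fin 3}

lemma tendsto_div_n (d : ℝ) : Tendsto (fun n : ℕ => d / (n + 2 : ℝ)) atTop (nhds 0) := by
  apply Filter.Tendsto.div_atTop (tendsto_const_nhds)
  exact tendsto_atTop_add_const_right _ 2 tendsto_natCast_atTop_atTop

/-- canonical decreasing sequence from `u` down to `ρ` (exclusive). -/
def seqd (ρ u : ℝ) (n : ℕ) : ℝ := ρ + (u - ρ) / (n + 2)

lemma seqd_tendsto (ρ u : ℝ) : Tendsto (seqd ρ u) atTop (nhds ρ) := by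
  have := (tendsto_div_n (u - ρ)).const_add ρ
  exact (by simpa using this : Tendsto (fun n : ℕ => ρ + (u - ρ) / (n + 2 : ℝ)) atTop (nhds ρ))

lemma seqd_mem {ρ u : ℝ} (h : ρ < u) (n : ℕ) : ρ < seqd ρ u n ∧ seqd ρ u n < u := by
  have h2 : (0:ℝ) < (n + 2 : ℝ) := by positivity
  have hd : 0 < (u - ρ) / (n + 2 : ℝ) := div_pos (by linarith) h2
  constructor
  · simp only [seqd]; linarith
  · have hle : (u - ρ) / (n + 2 : ℝ) ≤ (u - ρ) / 2 := by
      apply div_le_div_of_nonneg_left (by linarith) (by norm_num)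
      have : (2:ℝ) ≤ (n + 2 : ℝ) := by
        have : (0:ℝ) ≤ (n : ℝ) := Nat.cast_nonneg n
        linarith
      linarith
    simp only [seqd]
    linarith

/-- canonical increasing sequence from `l` up to `ρ` (exclusive). -/
def sequ (ρ l : ℝ) (n : ℕ) : ℝ := ρ - (ρ - l) / (n + 2)

lemma sequ_tendsto (ρ l : ℝ) : Tendsto (sequ ρ l) atTop (nhds ρ) := by
  have := ((tendsto_div_n (ρ - l)).const_sub ρ)
  exact (by simpa using this : Tendsto (fun n : ℕ => ρ - (ρ - l) / (n + 2 : ℝ)) atTop (nhds ρ))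

lemma sequ_mem {ρ l : ℝ} (h : l < ρ) (n : ℕ) : l < sequ ρ l n ∧ sequ ρ l n < ρ := by
  have h2 : (0:ℝ) < (n + 2 : ℝ) := by positivity
  have hd : 0 < (ρ - l) / (n + 2 : ℝ) := div_pos (by linarith) h2
  constructor
  · have hle : (ρ - l) / (n + 2 : ℝ) ≤ (ρ - l) / 2 := by
      apply div_le_div_of_nonneg_left (by linarith) (by norm_num)
      have : (0:ℝ) ≤ (n : ℝ) := Nat.cast_nonneg n
      linarith
    simp only [sequ]
    linarith
  · simp only [sequ]; linarith

lemma cont_seq (hC : NCContinuous φ)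
    (hab : a ≠ b) (hac : a ≠ c) (hbc : b ≠ c)
    {Q} (hQ : NoTiesProfile Q) (h : Fin 3)
    {t0 : ℝ} (hQh : Q h = vv a b c t0)
    {t : ℕ → ℝ} (ht : ∀ n, 0 < t n ∧ t n < 1) (htt : Tendsto t atTop (nhds t0))
    (g x : Fin 3) :
    Tendsto (fun n => φ (Function.update Q h (vv a b c (t n))) g x) atTop
      (nhds (φ Q g x)) := by
  have key : Tendsto (fun n => φ (Function.update Q h (vv a b c (t n)))) atTop (nhds (φ Q)) := by
    apply hC Q h (fun n => vv a b c (t n)) hQ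
    · rw [hQh]; exact vv_normalized hab hac hbc t0
    · intro n; exact ⟨vv_noties hab hac hbc (ht n).1 (ht n).2, vv_normalized hab hac hbc _⟩
    · rw [hQh]
      apply tendsto_pi_nhds.mpr
      intro y
      rcases obj_cases hab hac hbc y with rfl | rfl | rfl
      · simp only [vv_a]
        exact tendsto_const_nhds.sub (htt.div_const 3)
      · simp only [vv_b hab]
        exact (htt.const_mul 2).div_const 3
      · simp only [vv_c hac hbc]
        exact (htt.div_const 3).neg
  exact (tendsto_pi_nhds.mp ((tendsto_pi_nhds.mp key) g)) x

end Cont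

section Trade

variable {φ : (Fin 3 → Fin 3 → ℝ) → Fin 3 → Fin 3 → ℝ}
variable {a b c : Fin 3}

lemma third_exists {h l : Fin 3} (hhl : h ≠ l) : ∃ w : Fin 3, w ≠ h ∧ w ≠ l := by
  have h1 := h.isLt; have h2 := l.isLt
  have hne : h.val ≠ l.val := fun e => hhl (Fin.ext e)
  refine ⟨⟨3 - h.val - l.val, by omega⟩, ?_, ?_⟩ <;>
  · intro e
    have := congrArg Fin.val e
    simp at this
    omega

lemma trade (hB : BistochasticValued φ) (hE : Efficient φ)
    (hab : a ≠ b) (hac : a ≠ c) (hbc : b ≠ c)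
    {Q} (hQ : NoTiesProfile Q) {h l : Fin 3} (hhl : h ≠ l)
    {θh θl : ℝ} (hrh : Rated a b c (Q h) θh) (hrl : Rated a b c (Q l) θl)
    (hlt : θl < θh) :
    ¬(0 < φ Q h a ∧ 0 < φ Q h c ∧ 0 < φ Q l b) := by
  rintro ⟨hxa, hxc, hyb⟩
  obtain ⟨w, hwh, hwl⟩ := third_exists hhl
  obtain ⟨hθl0, hθl1⟩ := rated_bounds hrl
  obtain ⟨hθh0, hθh1⟩ := rated_bounds hrh
  set α : ℝ := (θh + θl)/2 with hα
  have hα0 : 0 < α := by simp only [hα]; linarith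
  have hα1 : α < 1 := by simp only [hα]; linarith
  have hαh : α < θh := by simp only [hα]; linarith
  have hαl : θl < α := by simp only [hα]; linarith
  set ε : ℝ := min (φ Q h a) (min (φ Q h c) (φ Q l b)) with hε
  have hε0 : 0 < ε := lt_min hxa (lt_min hxc hyb)
  have hεa : ε ≤ φ Q h a := min_le_left _ _
  have hεc : ε ≤ φ Q h c := le_trans (min_le_right _ _) (min_le_left _ _)
  have hεb : ε ≤ φ Q l b := le_trans (min_le_right _ _) (min_le_right _ _)
  set D : Fin 3 → ℝ := fun x => if x = a then -(α*ε) else if x = b then ε else -((1-α)*ε)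
    with hD
  have hDa : D a = -(α*ε) := by simp [hD]
  have hDb : D b = ε := by simp [hD, Ne.symm hab]
  have hDc : D c = -((1-α)*ε) := by simp [hD, Ne.symm hac, Ne.symm hbc]
  set π' : Fin 3 → Fin 3 → ℝ :=
    fun g x => φ Q g x + (if g = h then D x else if g = l then -D x else 0) with hπ'
  have hπ'h : ∀ x, π' h x = φ Q h x + D x := by intro x; simp [hπ']
  have hπ'l : ∀ x, π' l x = φ Q l x - D x := by
    intro x; simp [hπ', Ne.symm hhl]; ring
  have hπ'o : ∀ g, g ≠ h → g ≠ l → ∀ x, π' g x = φ Q g x := by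
    intro g hg hg' x; simp [hπ', hg, hg']
  have hda : 0 < Q h a - Q h c := by have := hrh.1; have := hrh.2.1; linarith
  have hdl : 0 < Q l a - Q l c := by have := hrl.1; have := hrl.2.1; linarith
  have hgainh : EU (Q h) (π' h) = EU (Q h) (φ Q h) + ε * ((Q h a - Q h c) * (θh - α)) := by
    have hfh : π' h = fun x => φ Q h x + D x := funext hπ'h
    rw [hfh, eu_add]
    congr 1
    rw [sum_obj hab hac hbc, hDa, hDb, hDc]
    linear_combination ε * hrh.2.2
  have hgainl : EU (Q l) (π' l) = EU (Q l) (φ Q l) + ε * ((Q l a - Q l c) * (α - θl)) := by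
    have hfl : π' l = fun x => φ Q l x + (-(D x)) := by
      funext x; rw [hπ'l]; ring
    rw [hfl, eu_add]
    congr 1
    rw [sum_obj hab hac hbc, hDa, hDb, hDc]
    linear_combination (-ε) * hrl.2.2
  apply hE Q hQ
  refine ⟨π', ⟨?_, ?_, ?_⟩, ?_, ⟨h, ?_⟩⟩
  · -- entrywise nonneg
    intro g x
    rcases eq_or_ne g h with rfl | hg
    · rw [hπ'h]
      rcases obj_cases hab hac hbc x with hx | hx | hx <;> rw [hx]
      · rw [hDa]; nlinarith
      · rw [hDb]; nlinarith [lot_nonneg hB hQ g b]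
      · rw [hDc]; nlinarith
    rcases eq_or_ne g l with rfl | hg'
    · rw [hπ'l]
      rcases obj_cases hab hac hbc x with hx | hx | hx <;> rw [hx]
      · rw [hDa]; nlinarith [lot_nonneg hB hQ g a]
      · rw [hDb]; linarith
      · rw [hDc]; nlinarith [lot_nonneg hB hQ g c]
    · rw [hπ'o g hg hg']
      exact lot_nonneg hB hQ g x
  · -- row sums
    intro g
    rw [sum_obj hab hac hbc]
    rcases eq_or_ne g h with rfl | hg
    · rw [hπ'h, hπ'h, hπ'h, hDa, hDb, hDc]
      have := lot_sum hB hab hac hbc hQ g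
      linarith [this]
    rcases eq_or_ne g l with rfl | hg'
    · rw [hπ'l, hπ'l, hπ'l, hDa, hDb, hDc]
      have := lot_sum hB hab hac hbc hQ g
      linarith [this]
    · rw [hπ'o g hg hg', hπ'o g hg hg', hπ'o g hg hg']
      exact lot_sum hB hab hac hbc hQ g
  · -- column sums
    intro x
    have hcol := (hB Q hQ).2.2 x
    rw [sum_obj hhl (Ne.symm hwh) (Ne.symm hwl)] at hcol ⊢
    rw [hπ'h, hπ'l, hπ'o w hwh hwl]
    linarith
  · -- weak dominance for everyone
    intro g
    rcases eq_or_ne g h with rfl | hg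
    · rw [hgainh]
      have hp : 0 < ε * ((Q g a - Q g c) * (θh - α)) :=
        mul_pos hε0 (mul_pos hda (by linarith))
      linarith
    rcases eq_or_ne g l with rfl | hg'
    · rw [hgainl]
      have hp : 0 < ε * ((Q g a - Q g c) * (α - θl)) :=
        mul_pos hε0 (mul_pos hdl (by linarith))
      linarith
    · have : π' g = φ Q g := funext (hπ'o g hg hg')
      rw [this]
  · -- strict for h
    rw [hgainh]
    have hp : 0 < ε * ((Q h a - Q h c) * (θh - α)) :=
      mul_pos hε0 (mul_pos hda (by linarith))
    linarith

end Trade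
end S8
end
noncomputable section
namespace S8

open Filter Topology

section Inv

variable {φ : (Fin 3 → Fin 3 → ℝ) → Fin 3 → Fin 3 → ℝ}
variable {a b c : Fin 3}

lemma inv_lemma (hB : BistochasticValued φ) (hSP : StrategyProof φ)
    (hNB : NonBossy φ) (hC : NCContinuous φ)
    (hab : a ≠ b) (hac : a ≠ c) (hbc : b ≠ c)
    {P} (hP : NoTiesProfile P) (h : Fin 3)
    {θ : ℝ} (hr : Rated a b c (P h) θ) :
    φ (Function.update P h (vv a b c θ)) = φ P := by
  obtain ⟨hθ0, hθ1⟩ := rated_bounds hr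
  have hvθ : NoTies (vv a b c θ) := vv_noties hab hac hbc hθ0 hθ1
  have hrθ : Rated a b c (vv a b c θ) θ := vv_rated hab hac hbc hθ0 hθ1
  set Pθ := Function.update P h (vv a b c θ) with hPθ
  have hPθn : NoTiesProfile Pθ := noties_update hP hvθ
  have hPθh : Pθ h = vv a b c θ := Function.update_self ..
  -- sequences
  set t : ℕ → ℝ := seqd θ 1 with ht
  set r : ℕ → ℝ := sequ θ 0 with hrr
  have htmem : ∀ n, θ < t n ∧ t n < 1 := fun n => seqd_mem hθ1 n
  have hrmem : ∀ n, 0 < r n ∧ r n < θ := fun n => sequ_mem hθ0 n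
  have htmem' : ∀ n, 0 < t n ∧ t n < 1 := fun n => ⟨lt_trans hθ0 (htmem n).1, (htmem n).2⟩
  have hrmem' : ∀ n, 0 < r n ∧ r n < 1 := fun n => ⟨(hrmem n).1, lt_trans (hrmem n).2 hθ1⟩
  have httend : Tendsto t atTop (nhds θ) := seqd_tendsto θ 1
  have hrtend : Tendsto r atTop (nhds θ) := sequ_tendsto θ 0
  -- continuity of allocations along the sequences
  have hconts : ∀ (g x : Fin 3), Tendsto (fun n => φ (Function.update P h (vv a b c (t n))) g x)
      atTop (nhds (φ Pθ g x)) := by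
    intro g x
    have := cont_seq hC hab hac hbc hPθn h hPθh htmem' httend g x
    simpa [hPθ, Function.update_idem] using this
  have hcontr : ∀ (g x : Fin 3), Tendsto (fun n => φ (Function.update P h (vv a b c (r n))) g x)
      atTop (nhds (φ Pθ g x)) := by
    intro g x
    have := cont_seq hC hab hac hbc hPθn h hPθh hrmem' hrtend g x
    simpa [hPθ, Function.update_idem] using this
  -- SP inequalities
  have hI : ∀ u : ℝ, 0 < u → u < 1 →
      φ (Function.update P h (vv a b c u)) h a + θ * φ (Function.update P h (vv a b c u)) h b
        ≤ φ P h a + θ * φ P h b := by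
    intro u h0 h1
    exact sp_score hB hSP hab hac hbc hP hr (vv_noties hab hac hbc h0 h1)
  have hII : ∀ u : ℝ, 0 < u → u < 1 →
      φ P h a + u * φ P h b
        ≤ φ (Function.update P h (vv a b c u)) h a
          + u * φ (Function.update P h (vv a b c u)) h b := by
    intro u h0 h1
    have hback : Function.update (Function.update P h (vv a b c u)) h (P h) = P := by
      rw [Function.update_idem, Function.update_eq_self]
    have hru : Rated a b c ((Function.update P h (vv a b c u)) h) u := by
      rw [Function.update_self]
      exact vv_rated hab hac hbc h0 h1
    have := sp_score hB hSP hab hac hbc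
      (noties_update hP (vv_noties hab hac hbc h0 h1)) hru (hP h)
    rwa [hback] at this
  -- b-components agree
  have hqb_le : φ P h b ≤ φ Pθ h b := by
    apply le_of_tendsto_of_tendsto' tendsto_const_nhds (hconts h b)
    intro n
    have h1 := hI (t n) (htmem' n).1 (htmem' n).2
    have h2 := hII (t n) (htmem' n).1 (htmem' n).2
    have hlt := (htmem n).1
    nlinarith [h1, h2]
  have hqb_ge : φ Pθ h b ≤ φ P h b := by
    apply le_of_tendsto_of_tendsto' (hcontr h b) tendsto_const_nhds
    intro n
    have h1 := hI (r n) (hrmem' n).1 (hrmem' n).2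
    have h2 := hII (r n) (hrmem' n).1 (hrmem' n).2
    have hlt := (hrmem n).2
    nlinarith [h1, h2]
  have hbb : φ Pθ h b = φ P h b := le_antisymm hqb_ge hqb_le
  -- score equality, hence a-components agree
  have hIθ := hI θ hθ0 hθ1
  have hscore_ge : φ P h a + θ * φ P h b ≤ φ Pθ h a + θ * φ Pθ h b := by
    have hA : Tendsto (fun n => φ P h a + t n * φ P h b) atTop
        (nhds (φ P h a + θ * φ P h b)) :=
      tendsto_const_nhds.add (httend.mul tendsto_const_nhds)
    have hBt : Tendsto (fun n => φ (Function.update P h (vv a b c (t n))) h a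
        + t n * φ (Function.update P h (vv a b c (t n))) h b) atTop
        (nhds (φ Pθ h a + θ * φ Pθ h b)) :=
      (hconts h a).add (httend.mul (hconts h b))
    apply le_of_tendsto_of_tendsto' hA hBt
    intro n
    exact hII (t n) (htmem' n).1 (htmem' n).2
  have haa : φ Pθ h a = φ P h a := by
    rw [hbb] at hIθ hscore_ge
    linarith
  have s1 := lot_sum hB hab hac hbc hPθn h
  have s2 := lot_sum hB hab hac hbc hP h
  have hcc : φ Pθ h c = φ P h c := by linarith
  have hfun : φ P h = φ Pθ h := by
    funext x
    rcases obj_cases hab hac hbc x with hx | hx | hx <;> rw [hx]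
    exacts [haa.symm, hbb.symm, hcc.symm]
  exact (hNB P h (vv a b c θ) hP hvθ hfun).symm

end Inv
end S8
end
noncomputable section
namespace S8

open Filter Topology

section KLem

variable {φ : (Fin 3 → Fin 3 → ℝ) → Fin 3 → Fin 3 → ℝ}
variable {a b c : Fin 3}

lemma not_both_pos {x y : ℝ} (hx : 0 ≤ x) (hy : 0 ≤ y) (h : ¬(0 < x ∧ 0 < y)) :
    x * y = 0 := by
  rcases hx.eq_or_lt' with h1 | h1
  · rw [h1, zero_mul]
  rcases hy.eq_or_lt' with h2 | h2
  · rw [h2, mul_zero]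
  exact absurd ⟨h1, h2⟩ h

lemma lemK (hB : BistochasticValued φ) (hE : Efficient φ) (hSP : StrategyProof φ)
    (hNB : NonBossy φ) (hC : NCContinuous φ)
    (hab : a ≠ b) (hac : a ≠ c) (hbc : b ≠ c)
    {P} (hP : NoTiesProfile P) {h l : Fin 3} (hhl : h ≠ l)
    {s rr : ℝ} (hs : Rated a b c (P h) s)
    (hr0 : 0 < rr) (hr1 : rr < 1) (hPl : P l = vv a b c rr)
    (hrs : rr < s) :
    ¬(0 < φ P h a ∧ 0 < φ P h b ∧ 0 < φ P h c) := by
  rintro ⟨hXa, hXb, hXc⟩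
  obtain ⟨hs0, hs1⟩ := rated_bounds hs
  have hPlr : Rated a b c (P l) rr := by rw [hPl]; exact vv_rated hab hac hbc hr0 hr1
  have hFr : Function.update P l (vv a b c rr) = P := by
    rw [← hPl, Function.update_eq_self]
  -- step 1 : the partner gets no b at P
  have hY0b : φ P l b = 0 := by
    have htr := trade hB hE hab hac hbc hP hhl hs hPlr hrs
    have := not_both_pos (lot_nonneg hB hP l b) (lot_nonneg hB hP l b)
      (fun hcon => htr ⟨hXa, hXc, hcon.1⟩)
    nlinarith [this]
  -- final contradiction helper : partner's lottery degenerate on a or c kills interiority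
  have hcontra : φ P l a = 0 ∨ φ P l c = 0 → False := by
    intro hd
    have hsuml := lot_sum hB hab hac hbc hP l
    rcases hd with hd | hd
    · have hcc : φ P l c = 1 := by rw [hd, hY0b] at hsuml; linarith
      have hcp := col_pair hB hP hhl c
      linarith
    · have haa : φ P l a = 1 := by rw [hd, hY0b] at hsuml; linarith
      have hcp := col_pair hB hP hhl a
      linarith
  -- the zero set of the partner's b-probability, along the partner's grid line
  set Z : Set ℝ := {ρ | 0 < ρ ∧ ρ < 1 ∧ φ (Function.update P l (vv a b c ρ)) l b = 0}
    with hZ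
  have hrrZ : rr ∈ Z := by
    refine ⟨hr0, hr1, ?_⟩
    rw [hFr]; exact hY0b
  have hZbdd : BddAbove Z := ⟨1, fun z hz => le_of_lt hz.2.1⟩
  have hZne : Z.Nonempty := ⟨rr, hrrZ⟩
  -- Z is an initial segment
  have hZinit : ∀ ρ z, z ∈ Z → 0 < ρ → ρ ≤ z → ρ ∈ Z := by
    intro ρ z hzZ hρ0 hρz
    rcases eq_or_lt_of_le hρz with rfl | hlt
    · exact hzZ
    refine ⟨hρ0, lt_trans hlt hzZ.2.1, ?_⟩
    have hm := mono_b hB hSP hab hac hbc hP l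
      (vv_rated hab hac hbc hρ0 (lt_trans hlt hzZ.2.1))
      (vv_rated hab hac hbc hzZ.1 hzZ.2.1)
      (vv_noties hab hac hbc hρ0 (lt_trans hlt hzZ.2.1))
      (vv_noties hab hac hbc hzZ.1 hzZ.2.1) hlt
    have hnn := lot_nonneg hB (Q := Function.update P l (vv a b c ρ))
      (noties_update (h := l) hP (vv_noties hab hac hbc hρ0 (lt_trans hlt hzZ.2.1))) l b
    have := hzZ.2.2
    linarith
  -- on Z the whole allocation is frozen
  have hZconst : ∀ ρ ∈ Z, φ (Function.update P l (vv a b c ρ)) = φ P := by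
    intro ρ hρ
    have hpb : φ (Function.update P l (vv a b c ρ)) l b
        = φ (Function.update P l (vv a b c rr)) l b := by
      rw [hFr, hρ.2.2, hY0b]
    have := pair_of_b hB hSP hNB hab hac hbc hP l
      (vv_rated hab hac hbc hρ.1 hρ.2.1) (vv_rated hab hac hbc hr0 hr1)
      (vv_noties hab hac hbc hρ.1 hρ.2.1) (vv_noties hab hac hbc hr0 hr1) hpb
    rw [hFr] at this
    exact this
  set ρ0 := sSup Z with hρ0
  have hρ0ge : rr ≤ ρ0 := le_csSup hZbdd hrrZ
  have hρ0le : ρ0 ≤ 1 := csSup_le hZne (fun z hz => le_of_lt hz.2.1)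
  have hρ0pos : 0 < ρ0 := lt_of_lt_of_le hr0 hρ0ge
  rcases eq_or_lt_of_le hρ0le with hρ0eq | hρ0lt
  · -- case sSup Z = 1 : the whole line is frozen; use a point above s
    have hallZ : ∀ ρ, 0 < ρ → ρ < 1 → ρ ∈ Z := by
      intro ρ h0 h1
      obtain ⟨z, hzZ, hz⟩ := exists_lt_of_lt_csSup hZne (by rw [← hρ0, hρ0eq]; exact h1)
      exact hZinit ρ z hzZ h0 (le_of_lt hz)
    set ρh : ℝ := (s+1)/2 with hρh
    have hρh1 : ρh < 1 := by rw [hρh]; linarith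
    have hρhs : s < ρh := by rw [hρh]; linarith
    have hρh0 : 0 < ρh := by rw [hρh]; linarith
    have hmem := hallZ ρh hρh0 hρh1
    have hfreeze := hZconst ρh hmem
    set Qh := Function.update P l (vv a b c ρh) with hQh
    have hQhn : NoTiesProfile Qh := noties_update hP (vv_noties hab hac hbc hρh0 hρh1)
    have htr := trade hB hE hab hac hbc hQhn (Ne.symm hhl)
      (h := l) (l := h)
      (by rw [hQh, Function.update_self]; exact vv_rated hab hac hbc hρh0 hρh1)
      (by rw [hQh, Function.update_of_ne hhl]; exact hs) hρhs
    rw [hQh, hfreeze] at htr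
    have hd := not_both_pos (lot_nonneg hB hP l a) (lot_nonneg hB hP l c)
      (fun hcon => htr ⟨hcon.1, hcon.2, hXb⟩)
    apply hcontra
    rcases mul_eq_zero.mp hd with hd | hd
    exacts [Or.inl hd, Or.inr hd]
  · -- case sSup Z < 1
    have hρ0one : ρ0 < 1 := hρ0lt
    -- the allocation at ρ0 is frozen too
    have hF0 : φ (Function.update P l (vv a b c ρ0)) = φ P := by
      obtain ⟨zs, hmono, hztend, hzmem⟩ := exists_seq_tendsto_sSup hZne hZbdd
      have hz01 : ∀ n, 0 < zs n ∧ zs n < 1 := fun n => ⟨(hzmem n).1, (hzmem n).2.1⟩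
      have hn : NoTiesProfile (Function.update P l (vv a b c ρ0)) :=
        noties_update hP (vv_noties hab hac hbc hρ0pos hρ0one)
      funext g x
      have hcont := cont_seq hC hab hac hbc hn l
        (Function.update_self ..) hz01 (by rw [← hρ0] at hztend; exact hztend) g x
      simp only [Function.update_idem] at hcont
      have hconst : ∀ n, φ (Function.update P l (vv a b c (zs n))) g x = φ P g x := by
        intro n; rw [hZconst (zs n) (hzmem n)]
      have : Tendsto (fun _ : ℕ => φ P g x) atTop
          (nhds (φ (Function.update P l (vv a b c ρ0)) g x)) := by
        apply hcont.congr
        intro n; rw [hconst n]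
      exact tendsto_nhds_unique this tendsto_const_nhds
    have hn0 : NoTiesProfile (Function.update P l (vv a b c ρ0)) :=
      noties_update hP (vv_noties hab hac hbc hρ0pos hρ0one)
    rcases lt_or_ge ρ0 s with hcase | hcase
    · -- sub-case ρ0 < s : approach from above, below s
      set σ : ℕ → ℝ := seqd ρ0 s with hσ
      have hσmem : ∀ n, ρ0 < σ n ∧ σ n < s := fun n => seqd_mem hcase n
      have hσ01 : ∀ n, 0 < σ n ∧ σ n < 1 :=
        fun n => ⟨lt_trans hρ0pos (hσmem n).1, lt_trans (hσmem n).2 hs1⟩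
      have hσtend : Tendsto σ atTop (nhds ρ0) := seqd_tendsto ρ0 s
      have hcont : ∀ g x, Tendsto (fun n => φ (Function.update P l (vv a b c (σ n))) g x)
          atTop (nhds (φ P g x)) := by
        intro g x
        have := cont_seq hC hab hac hbc hn0 l (Function.update_self ..) hσ01 hσtend g x
        simp only [Function.update_idem, hF0] at this
        exact this
      have hzero : ∀ n, φ (Function.update P l (vv a b c (σ n))) h a
          * φ (Function.update P l (vv a b c (σ n))) h c = 0 := by
        intro n
        set Qn := Function.update P l (vv a b c (σ n)) with hQn
        have hQnn : NoTiesProfile Qn :=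
          noties_update hP (vv_noties hab hac hbc (hσ01 n).1 (hσ01 n).2)
        have hYb : 0 < φ Qn l b := by
          rcases (lot_nonneg hB hQnn l b).eq_or_lt' with h0 | h0
          · exfalso
            have hmemZ : σ n ∈ Z := ⟨(hσ01 n).1, (hσ01 n).2, by rw [← hQn]; exact h0⟩
            have := le_csSup hZbdd hmemZ
            rw [← hρ0] at this
            exact absurd this (not_le.mpr (hσmem n).1)
          · exact h0
        have htr := trade hB hE hab hac hbc hQnn hhl
          (by rw [hQn, Function.update_of_ne hhl]; exact hs)
          (by rw [hQn, Function.update_self]; exact vv_rated hab hac hbc (hσ01 n).1 (hσ01 n).2)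
          (hσmem n).2
        exact not_both_pos (lot_nonneg hB hQnn h a) (lot_nonneg hB hQnn h c)
          (fun hcon => htr ⟨hcon.1, hcon.2, hYb⟩)
      have hlim : Tendsto (fun n => φ (Function.update P l (vv a b c (σ n))) h a
          * φ (Function.update P l (vv a b c (σ n))) h c) atTop
          (nhds (φ P h a * φ P h c)) := (hcont h a).mul (hcont h c)
      have : φ P h a * φ P h c = 0 := by
        have h2 : Tendsto (fun _ : ℕ => (0:ℝ)) atTop (nhds (φ P h a * φ P h c)) := by
          apply hlim.congr
          intro n; rw [hzero n]
        exact (tendsto_nhds_unique h2 tendsto_const_nhds)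
      nlinarith [this]
    · -- sub-case s ≤ ρ0 : approach from above, above s
      set σ : ℕ → ℝ := seqd ρ0 1 with hσ
      have hσmem : ∀ n, ρ0 < σ n ∧ σ n < 1 := fun n => seqd_mem hρ0one n
      have hσ01 : ∀ n, 0 < σ n ∧ σ n < 1 :=
        fun n => ⟨lt_trans hρ0pos (hσmem n).1, (hσmem n).2⟩
      have hσtend : Tendsto σ atTop (nhds ρ0) := seqd_tendsto ρ0 1
      have hcont : ∀ g x, Tendsto (fun n => φ (Function.update P l (vv a b c (σ n))) g x)
          atTop (nhds (φ P g x)) := by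
        intro g x
        have := cont_seq hC hab hac hbc hn0 l (Function.update_self ..) hσ01 hσtend g x
        simp only [Function.update_idem, hF0] at this
        exact this
      have hev : ∀ᶠ n in atTop, 0 < φ (Function.update P l (vv a b c (σ n))) h b :=
        (hcont h b).eventually (lt_mem_nhds hXb)
      have hevz : ∀ᶠ n in atTop, φ (Function.update P l (vv a b c (σ n))) l a
          * φ (Function.update P l (vv a b c (σ n))) l c = 0 := by
        filter_upwards [hev] with n hXbn
        set Qn := Function.update P l (vv a b c (σ n)) with hQn
        have hQnn : NoTiesProfile Qn :=
          noties_update hP (vv_noties hab hac hbc (hσ01 n).1 (hσ01 n).2)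
        have htr := trade hB hE hab hac hbc hQnn (Ne.symm hhl)
          (h := l) (l := h)
          (by rw [hQn, Function.update_self]; exact vv_rated hab hac hbc (hσ01 n).1 (hσ01 n).2)
          (by rw [hQn, Function.update_of_ne hhl]; exact hs)
          (lt_of_le_of_lt hcase (hσmem n).1)
        exact not_both_pos (lot_nonneg hB hQnn l a) (lot_nonneg hB hQnn l c)
          (fun hcon => htr ⟨hcon.1, hcon.2, hXbn⟩)
      have hlim : Tendsto (fun n => φ (Function.update P l (vv a b c (σ n))) l a
          * φ (Function.update P l (vv a b c (σ n))) l c) atTop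
          (nhds (φ P l a * φ P l c)) := (hcont l a).mul (hcont l c)
      have hzz : φ P l a * φ P l c = 0 := by
        have h2 : Tendsto (fun _ : ℕ => (0:ℝ)) atTop (nhds (φ P l a * φ P l c)) :=
          hlim.congr' (by filter_upwards [hevz] with n hn; rw [hn])
        exact tendsto_nhds_unique h2 tendsto_const_nhds
      apply hcontra
      rcases mul_eq_zero.mp hzz with hd | hd
      exacts [Or.inl hd, Or.inr hd]

end KLem
end S8
end
noncomputable section
namespace S8

open Filter Topology

section ALem

variable {φ : (Fin 3 → Fin 3 → ℝ) → Fin 3 → Fin 3 → ℝ}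
variable {a b c : Fin 3}

lemma lemAlpha (hB : BistochasticValued φ) (hE : Efficient φ) (hSP : StrategyProof φ)
    (hNB : NonBossy φ) (hC : NCContinuous φ)
    (hab : a ≠ b) (hac : a ≠ c) (hbc : b ≠ c)
    {P} (hP : NoTiesProfile P) {h l : Fin 3} (hhl : h ≠ l)
    {s m' : ℝ} (hs0 : 0 < s) (hs1 : s < 1) (hPh : P h = vv a b c s)
    (hm0 : 0 < m') (hm1 : m' < 1) (hPl : P l = vv a b c m')
    (hsm : s < m') :
    ¬(0 < φ P h a ∧ 0 < φ P h b ∧ 0 < φ P h c) := by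
  rintro ⟨hXa, hXb, hXc⟩
  have hPhr : Rated a b c (P h) s := by rw [hPh]; exact vv_rated hab hac hbc hs0 hs1
  have hPlr : Rated a b c (P l) m' := by rw [hPl]; exact vv_rated hab hac hbc hm0 hm1
  have hFl : Function.update P l (vv a b c m') = P := by
    rw [← hPl, Function.update_eq_self]
  -- step 1 : partner's lottery misses a or c
  have hY0 : φ P l a = 0 ∨ φ P l c = 0 := by
    have htr := trade hB hE hab hac hbc hP (Ne.symm hhl) hPlr hPhr hsm
    have := not_both_pos (lot_nonneg hB hP l a) (lot_nonneg hB hP l c)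
      (fun hcon => htr ⟨hcon.1, hcon.2, hXb⟩)
    rcases mul_eq_zero.mp this with hd | hd
    exacts [Or.inl hd, Or.inr hd]
  -- partner must consume some b, else columns kill interiority
  have hYb : 0 < φ P l b := by
    rcases (lot_nonneg hB hP l b).eq_or_lt' with h0 | h0
    · exfalso
      have hsuml := lot_sum hB hab hac hbc hP l
      rcases hY0 with hd | hd
      · have hcc : φ P l c = 1 := by rw [hd, ← h0] at hsuml; linarith
        have hcp := col_pair hB hP hhl c
        linarith
      · have haa : φ P l a = 1 := by rw [hd, ← h0] at hsuml; linarith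
        have hcp := col_pair hB hP hhl a
        linarith
    · exact h0
  -- no grid point of the partner strictly below s can replicate
  have hnotbelow : ∀ ρ, 0 < ρ → ρ < s → φ (Function.update P l (vv a b c ρ)) = φ P → False := by
    intro ρ h0 h1 hfreeze
    have hQn : NoTiesProfile (Function.update P l (vv a b c ρ)) :=
      noties_update hP (vv_noties hab hac hbc h0 (lt_trans h1 hs1))
    have htr := trade hB hE hab hac hbc hQn hhl
      (by rw [Function.update_of_ne hhl]; exact hPhr)
      (by rw [Function.update_self]; exact vv_rated hab hac hbc h0 (lt_trans h1 hs1))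
      h1
    rw [hfreeze] at htr
    exact htr ⟨hXa, hXc, hYb⟩
  rcases hY0 with hbrA | hbrC
  · -- branch : φ P l a = 0
    set A : Set ℝ := {ρ | 0 < ρ ∧ ρ < 1 ∧ φ (Function.update P l (vv a b c ρ)) l a = 0}
      with hA
    have hmA : m' ∈ A := ⟨hm0, hm1, by rw [hFl]; exact hbrA⟩
    have hAne : A.Nonempty := ⟨m', hmA⟩
    have hAconst : ∀ ρ ∈ A, φ (Function.update P l (vv a b c ρ)) = φ P := by
      intro ρ hρ
      have := pair_of_a hB hSP hNB hab hac hbc hP l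
        (vv_rated hab hac hbc hρ.1 hρ.2.1) (vv_rated hab hac hbc hm0 hm1)
        (vv_noties hab hac hbc hρ.1 hρ.2.1) (vv_noties hab hac hbc hm0 hm1)
        hρ.2.2 (by rw [hFl]; exact hbrA)
      rw [hFl] at this
      exact this
    have hAbelow : ∀ ρ ∈ A, s ≤ ρ := by
      intro ρ hρ
      by_contra hcon
      exact hnotbelow ρ hρ.1 (not_le.mp hcon) (hAconst ρ hρ)
    have hAbdd : BddBelow A := ⟨0, fun ρ hρ => le_of_lt hρ.1⟩
    set a0 := sInf A with ha0
    have hsa : s ≤ a0 := le_csInf hAne hAbelow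
    have ham : a0 ≤ m' := csInf_le hAbdd hmA
    have ha00 : 0 < a0 := lt_of_lt_of_le hs0 hsa
    have ha01 : a0 < 1 := lt_of_le_of_lt ham hm1
    have hn0 : NoTiesProfile (Function.update P l (vv a b c a0)) :=
      noties_update hP (vv_noties hab hac hbc ha00 ha01)
    have hFa : φ (Function.update P l (vv a b c a0)) = φ P := by
      obtain ⟨zs, hanti, hztend, hzmem⟩ := exists_seq_tendsto_sInf hAne hAbdd
      have hz01 : ∀ n, 0 < zs n ∧ zs n < 1 := fun n => ⟨(hzmem n).1, (hzmem n).2.1⟩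
      funext g x
      have hcont := cont_seq hC hab hac hbc hn0 l
        (Function.update_self ..) hz01 (by rw [← ha0] at hztend; exact hztend) g x
      simp only [Function.update_idem] at hcont
      have : Tendsto (fun _ : ℕ => φ P g x) atTop
          (nhds (φ (Function.update P l (vv a b c a0)) g x)) := by
        apply hcont.congr
        intro n; rw [hAconst (zs n) (hzmem n)]
      exact tendsto_nhds_unique this tendsto_const_nhds
    rcases eq_or_lt_of_le hsa with heq | hlt
    · -- a0 = s : approach s from below and apply lemK
      set σ : ℕ → ℝ := sequ s 0 with hσ
      have hσmem : ∀ n, 0 < σ n ∧ σ n < s := fun n => sequ_mem hs0 n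
      have hσ01 : ∀ n, 0 < σ n ∧ σ n < 1 :=
        fun n => ⟨(hσmem n).1, lt_trans (hσmem n).2 hs1⟩
      have hσtend : Tendsto σ atTop (nhds s) := sequ_tendsto s 0
      have hcont : ∀ g x, Tendsto (fun n => φ (Function.update P l (vv a b c (σ n))) g x)
          atTop (nhds (φ P g x)) := by
        intro g x
        have := cont_seq hC hab hac hbc hn0 l (Function.update_self ..) hσ01
          (by rw [heq] at hσtend; exact hσtend) g x
        simp only [Function.update_idem, hFa] at this
        exact this
      have hea : ∀ᶠ n in atTop, 0 < φ (Function.update P l (vv a b c (σ n))) h a :=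
        (hcont h a).eventually (lt_mem_nhds hXa)
      have heb : ∀ᶠ n in atTop, 0 < φ (Function.update P l (vv a b c (σ n))) h b :=
        (hcont h b).eventually (lt_mem_nhds hXb)
      have hec : ∀ᶠ n in atTop, 0 < φ (Function.update P l (vv a b c (σ n))) h c :=
        (hcont h c).eventually (lt_mem_nhds hXc)
      obtain ⟨n, hna, hnb, hnc⟩ := (hea.and (heb.and hec)).exists
      have hQn : NoTiesProfile (Function.update P l (vv a b c (σ n))) :=
        noties_update hP (vv_noties hab hac hbc (hσ01 n).1 (hσ01 n).2)
      exact lemK hB hE hSP hNB hC hab hac hbc hQn hhl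
        (by rw [Function.update_of_ne hhl]; exact hPhr)
        (hσ01 n).1 (hσ01 n).2 (Function.update_self ..) (hσmem n).2
        ⟨hna, hnb, hnc⟩
    · -- s < a0 : approach a0 from below
      set σ : ℕ → ℝ := sequ a0 s with hσ
      have hσmem : ∀ n, s < σ n ∧ σ n < a0 := fun n => sequ_mem hlt n
      have hσ01 : ∀ n, 0 < σ n ∧ σ n < 1 :=
        fun n => ⟨lt_trans hs0 (hσmem n).1, lt_trans (hσmem n).2 ha01⟩
      have hσtend : Tendsto σ atTop (nhds a0) := sequ_tendsto a0 s
      have hcont : ∀ g x, Tendsto (fun n => φ (Function.update P l (vv a b c (σ n))) g x)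
          atTop (nhds (φ P g x)) := by
        intro g x
        have := cont_seq hC hab hac hbc hn0 l (Function.update_self ..) hσ01 hσtend g x
        simp only [Function.update_idem, hFa] at this
        exact this
      have heb : ∀ᶠ n in atTop, 0 < φ (Function.update P l (vv a b c (σ n))) h b :=
        (hcont h b).eventually (lt_mem_nhds hXb)
      have hevz : ∀ᶠ n in atTop, φ (Function.update P l (vv a b c (σ n))) l c = 0 := by
        filter_upwards [heb] with n hXbn
        have hQn : NoTiesProfile (Function.update P l (vv a b c (σ n))) :=
          noties_update hP (vv_noties hab hac hbc (hσ01 n).1 (hσ01 n).2)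
        have hYa : 0 < φ (Function.update P l (vv a b c (σ n))) l a := by
          rcases (lot_nonneg hB hQn l a).eq_or_lt' with h0 | h0
          · exfalso
            have hmemA : σ n ∈ A := ⟨(hσ01 n).1, (hσ01 n).2, h0⟩
            have := csInf_le hAbdd hmemA
            rw [← ha0] at this
            exact absurd this (not_le.mpr (hσmem n).2)
          · exact h0
        have htr := trade hB hE hab hac hbc hQn (Ne.symm hhl)
          (by rw [Function.update_self]; exact vv_rated hab hac hbc (hσ01 n).1 (hσ01 n).2)
          (by rw [Function.update_of_ne hhl]; exact hPhr)
          (hσmem n).1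
        have := not_both_pos (lot_nonneg hB hQn l c) (lot_nonneg hB hQn l c)
          (fun hcon => htr ⟨hYa, hcon.1, hXbn⟩)
        nlinarith [this]
      have hlim : Tendsto (fun n => φ (Function.update P l (vv a b c (σ n))) l c) atTop
          (nhds (φ P l c)) := hcont l c
      have hYc : φ P l c = 0 := by
        have h2 : Tendsto (fun _ : ℕ => (0:ℝ)) atTop (nhds (φ P l c)) :=
          hlim.congr' (by filter_upwards [hevz] with n hn; rw [hn])
        exact tendsto_nhds_unique h2 tendsto_const_nhds
      -- partner's lottery is δ_b : column b kills interiority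
      have hsuml := lot_sum hB hab hac hbc hP l
      have hcp := col_pair hB hP hhl b
      rw [hbrA, hYc] at hsuml
      linarith
  · -- branch : φ P l c = 0  (mirror)
    set C : Set ℝ := {ρ | 0 < ρ ∧ ρ < 1 ∧ φ (Function.update P l (vv a b c ρ)) l c = 0}
      with hCset
    have hmC : m' ∈ C := ⟨hm0, hm1, by rw [hFl]; exact hbrC⟩
    have hCne : C.Nonempty := ⟨m', hmC⟩
    have hCconst : ∀ ρ ∈ C, φ (Function.update P l (vv a b c ρ)) = φ P := by
      intro ρ hρ
      have := pair_of_c hB hSP hNB hab hac hbc hP l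
        (vv_rated hab hac hbc hρ.1 hρ.2.1) (vv_rated hab hac hbc hm0 hm1)
        (vv_noties hab hac hbc hρ.1 hρ.2.1) (vv_noties hab hac hbc hm0 hm1)
        hρ.2.2 (by rw [hFl]; exact hbrC)
      rw [hFl] at this
      exact this
    have hCbelow : ∀ ρ ∈ C, s ≤ ρ := by
      intro ρ hρ
      by_contra hcon
      exact hnotbelow ρ hρ.1 (not_le.mp hcon) (hCconst ρ hρ)
    have hCbdd : BddBelow C := ⟨0, fun ρ hρ => le_of_lt hρ.1⟩
    set c0 := sInf C with hc0
    have hsc : s ≤ c0 := le_csInf hCne hCbelow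
    have hcm : c0 ≤ m' := csInf_le hCbdd hmC
    have hc00 : 0 < c0 := lt_of_lt_of_le hs0 hsc
    have hc01 : c0 < 1 := lt_of_le_of_lt hcm hm1
    have hn0 : NoTiesProfile (Function.update P l (vv a b c c0)) :=
      noties_update hP (vv_noties hab hac hbc hc00 hc01)
    have hFc : φ (Function.update P l (vv a b c c0)) = φ P := by
      obtain ⟨zs, hanti, hztend, hzmem⟩ := exists_seq_tendsto_sInf hCne hCbdd
      have hz01 : ∀ n, 0 < zs n ∧ zs n < 1 := fun n => ⟨(hzmem n).1, (hzmem n).2.1⟩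
      funext g x
      have hcont := cont_seq hC hab hac hbc hn0 l
        (Function.update_self ..) hz01 (by rw [← hc0] at hztend; exact hztend) g x
      simp only [Function.update_idem] at hcont
      have : Tendsto (fun _ : ℕ => φ P g x) atTop
          (nhds (φ (Function.update P l (vv a b c c0)) g x)) := by
        apply hcont.congr
        intro n; rw [hCconst (zs n) (hzmem n)]
      exact tendsto_nhds_unique this tendsto_const_nhds
    rcases eq_or_lt_of_le hsc with heq | hlt
    · set σ : ℕ → ℝ := sequ s 0 with hσ
      have hσmem : ∀ n, 0 < σ n ∧ σ n < s := fun n => sequ_mem hs0 n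
      have hσ01 : ∀ n, 0 < σ n ∧ σ n < 1 :=
        fun n => ⟨(hσmem n).1, lt_trans (hσmem n).2 hs1⟩
      have hσtend : Tendsto σ atTop (nhds s) := sequ_tendsto s 0
      have hcont : ∀ g x, Tendsto (fun n => φ (Function.update P l (vv a b c (σ n))) g x)
          atTop (nhds (φ P g x)) := by
        intro g x
        have := cont_seq hC hab hac hbc hn0 l (Function.update_self ..) hσ01
          (by rw [heq] at hσtend; exact hσtend) g x
        simp only [Function.update_idem, hFc] at this
        exact this
      have hea : ∀ᶠ n in atTop, 0 < φ (Function.update P l (vv a b c (σ n))) h a :=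
        (hcont h a).eventually (lt_mem_nhds hXa)
      have heb : ∀ᶠ n in atTop, 0 < φ (Function.update P l (vv a b c (σ n))) h b :=
        (hcont h b).eventually (lt_mem_nhds hXb)
      have hec : ∀ᶠ n in atTop, 0 < φ (Function.update P l (vv a b c (σ n))) h c :=
        (hcont h c).eventually (lt_mem_nhds hXc)
      obtain ⟨n, hna, hnb, hnc⟩ := (hea.and (heb.and hec)).exists
      have hQn : NoTiesProfile (Function.update P l (vv a b c (σ n))) :=
        noties_update hP (vv_noties hab hac hbc (hσ01 n).1 (hσ01 n).2)
      exact lemK hB hE hSP hNB hC hab hac hbc hQn hhl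
        (by rw [Function.update_of_ne hhl]; exact hPhr)
        (hσ01 n).1 (hσ01 n).2 (Function.update_self ..) (hσmem n).2
        ⟨hna, hnb, hnc⟩
    · set σ : ℕ → ℝ := sequ c0 s with hσ
      have hσmem : ∀ n, s < σ n ∧ σ n < c0 := fun n => sequ_mem hlt n
      have hσ01 : ∀ n, 0 < σ n ∧ σ n < 1 :=
        fun n => ⟨lt_trans hs0 (hσmem n).1, lt_trans (hσmem n).2 hc01⟩
      have hσtend : Tendsto σ atTop (nhds c0) := sequ_tendsto c0 s
      have hcont : ∀ g x, Tendsto (fun n => φ (Function.update P l (vv a b c (σ n))) g x)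
          atTop (nhds (φ P g x)) := by
        intro g x
        have := cont_seq hC hab hac hbc hn0 l (Function.update_self ..) hσ01 hσtend g x
        simp only [Function.update_idem, hFc] at this
        exact this
      have heb : ∀ᶠ n in atTop, 0 < φ (Function.update P l (vv a b c (σ n))) h b :=
        (hcont h b).eventually (lt_mem_nhds hXb)
      have hevz : ∀ᶠ n in atTop, φ (Function.update P l (vv a b c (σ n))) l a = 0 := by
        filter_upwards [heb] with n hXbn
        have hQn : NoTiesProfile (Function.update P l (vv a b c (σ n))) :=
          noties_update hP (vv_noties hab hac hbc (hσ01 n).1 (hσ01 n).2)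
        have hYc : 0 < φ (Function.update P l (vv a b c (σ n))) l c := by
          rcases (lot_nonneg hB hQn l c).eq_or_lt' with h0 | h0
          · exfalso
            have hmemC : σ n ∈ C := ⟨(hσ01 n).1, (hσ01 n).2, h0⟩
            have := csInf_le hCbdd hmemC
            rw [← hc0] at this
            exact absurd this (not_le.mpr (hσmem n).2)
          · exact h0
        have htr := trade hB hE hab hac hbc hQn (Ne.symm hhl)
          (by rw [Function.update_self]; exact vv_rated hab hac hbc (hσ01 n).1 (hσ01 n).2)
          (by rw [Function.update_of_ne hhl]; exact hPhr)
          (hσmem n).1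
        have := not_both_pos (lot_nonneg hB hQn l a) (lot_nonneg hB hQn l a)
          (fun hcon => htr ⟨hcon.1, hYc, hXbn⟩)
        nlinarith [this]
      have hlim : Tendsto (fun n => φ (Function.update P l (vv a b c (σ n))) l a) atTop
          (nhds (φ P l a)) := hcont l a
      have hYa : φ P l a = 0 := by
        have h2 : Tendsto (fun _ : ℕ => (0:ℝ)) atTop (nhds (φ P l a)) :=
          hlim.congr' (by filter_upwards [hevz] with n hn; rw [hn])
        exact tendsto_nhds_unique h2 tendsto_const_nhds
      have hsuml := lot_sum hB hab hac hbc hP l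
      have hcp := col_pair hB hP hhl b
      rw [hbrC, hYa] at hsuml
      linarith

end ALem
end S8
end
noncomputable section
namespace S8

open Filter Topology

section Line

variable {φ : (Fin 3 → Fin 3 → ℝ) → Fin 3 → Fin 3 → ℝ}
variable {a b c : Fin 3}

lemma not_all_pos {x y z : ℝ} (hx : 0 ≤ x) (hy : 0 ≤ y) (hz : 0 ≤ z)
    (h : ¬(0 < x ∧ 0 < y ∧ 0 < z)) : x * (y * z) = 0 := by
  rcases hx.eq_or_lt' with h1 | h1
  · simp [h1]
  rcases hy.eq_or_lt' with h2 | h2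
  · simp [h2]
  rcases hz.eq_or_lt' with h3 | h3
  · simp [h3]
  exact absurd ⟨h1, h2, h3⟩ h

lemma mono_a (hB : BistochasticValued φ) (hSP : StrategyProof φ)
    (hab : a ≠ b) (hac : a ≠ c) (hbc : b ≠ c)
    {Q} (hQ : NoTiesProfile Q) (h : Fin 3)
    {z1 z2 : Fin 3 → ℝ} {θ1 θ2 : ℝ}
    (hr1 : Rated a b c z1 θ1) (hr2 : Rated a b c z2 θ2)
    (hz1 : NoTies z1) (hz2 : NoTies z2) (hlt : θ1 < θ2) :
    φ (Function.update Q h z2) h a ≤ φ (Function.update Q h z1) h a := by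
  have A := sp_pairs hB hSP hab hac hbc hQ h hr1 hz1 hz2
  have hb := mono_b hB hSP hab hac hbc hQ h hr1 hr2 hz1 hz2 hlt
  have hθ1 := (rated_bounds hr1).1
  nlinarith [A, hb]

lemma mono_c (hB : BistochasticValued φ) (hSP : StrategyProof φ)
    (hab : a ≠ b) (hac : a ≠ c) (hbc : b ≠ c)
    {Q} (hQ : NoTiesProfile Q) (h : Fin 3)
    {z1 z2 : Fin 3 → ℝ} {θ1 θ2 : ℝ}
    (hr1 : Rated a b c z1 θ1) (hr2 : Rated a b c z2 θ2)
    (hz1 : NoTies z1) (hz2 : NoTies z2) (hlt : θ1 < θ2) :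
    φ (Function.update Q h z2) h c ≤ φ (Function.update Q h z1) h c := by
  have B := sp_pairs hB hSP hab hac hbc hQ h hr2 hz2 hz1
  have hb := mono_b hB hSP hab hac hbc hQ h hr1 hr2 hz1 hz2 hlt
  have hθ2 := (rated_bounds hr2).2
  have s1 := lot_sum hB hab hac hbc (Q := Function.update Q h z1)
    (noties_update (h := h) hQ hz1) h
  have s2 := lot_sum hB hab hac hbc (Q := Function.update Q h z2)
    (noties_update (h := h) hQ hz2) h
  nlinarith [B, hb]

lemma line_const (hB : BistochasticValued φ) (hE : Efficient φ) (hSP : StrategyProof φ)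
    (hNB : NonBossy φ) (hC : NCContinuous φ)
    (hab : a ≠ b) (hac : a ≠ c) (hbc : b ≠ c)
    {B0} (hB0n : NoTiesProfile B0) {i j : Fin 3} (hij : i ≠ j)
    {m : ℝ} (hm0 : 0 < m) (hm1 : m < 1) (hB0j : B0 j = vv a b c m)
    {s1 s2 : ℝ} (h10 : 0 < s1) (h11 : s1 < 1) (h20 : 0 < s2) (h21 : s2 < 1) :
    φ (Function.update B0 i (vv a b c s1)) = φ (Function.update B0 i (vv a b c s2)) := by
  have hLn : ∀ s : ℝ, 0 < s → s < 1 → NoTiesProfile (Function.update B0 i (vv a b c s)) :=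
    fun s h0 h1 => noties_update hB0n (vv_noties hab hac hbc h0 h1)
  have hLj : ∀ s : ℝ, (Function.update B0 i (vv a b c s)) j = vv a b c m :=
    fun s => by rw [Function.update_of_ne (Ne.symm hij), hB0j]
  have hLi : ∀ s : ℝ, (Function.update B0 i (vv a b c s)) i = vv a b c s :=
    fun s => Function.update_self ..
  -- nowhere fully interior along the line
  have hnotint : ∀ s : ℝ, 0 < s → s < 1 →
      ¬(0 < φ (Function.update B0 i (vv a b c s)) i a
        ∧ 0 < φ (Function.update B0 i (vv a b c s)) i b
        ∧ 0 < φ (Function.update B0 i (vv a b c s)) i c) := by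
    intro s h0 h1
    rcases lt_trichotomy s m with hsm | hsm | hsm
    · exact lemAlpha hB hE hSP hNB hC hab hac hbc (hLn s h0 h1) hij
        h0 h1 (hLi s) hm0 hm1 (hLj s) hsm
    · -- s = m : take limits from below
      subst hsm
      rintro ⟨hXa, hXb, hXc⟩
      set σ : ℕ → ℝ := sequ s 0 with hσ
      have hσmem : ∀ n, 0 < σ n ∧ σ n < s := fun n => sequ_mem h0 n
      have hσ01 : ∀ n, 0 < σ n ∧ σ n < 1 :=
        fun n => ⟨(hσmem n).1, lt_trans (hσmem n).2 h1⟩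
      have hσtend : Tendsto σ atTop (nhds s) := sequ_tendsto s 0
      have hcont : ∀ g x, Tendsto
          (fun n => φ (Function.update B0 i (vv a b c (σ n))) g x) atTop
          (nhds (φ (Function.update B0 i (vv a b c s)) g x)) := by
        intro g x
        have := cont_seq hC hab hac hbc (hLn s h0 h1) i (hLi s) hσ01 hσtend g x
        simpa [Function.update_idem] using this
      have hzero : ∀ n, φ (Function.update B0 i (vv a b c (σ n))) i a
          * (φ (Function.update B0 i (vv a b c (σ n))) i b
            * φ (Function.update B0 i (vv a b c (σ n))) i c) = 0 := by
        intro n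
        have hni := lemAlpha hB hE hSP hNB hC hab hac hbc
          (hLn (σ n) (hσ01 n).1 (hσ01 n).2) hij (hσ01 n).1 (hσ01 n).2
          (hLi (σ n)) hm0 hm1 (hLj (σ n)) (hσmem n).2
        exact not_all_pos (lot_nonneg hB (hLn (σ n) (hσ01 n).1 (hσ01 n).2) i a)
          (lot_nonneg hB (hLn (σ n) (hσ01 n).1 (hσ01 n).2) i b)
          (lot_nonneg hB (hLn (σ n) (hσ01 n).1 (hσ01 n).2) i c) hni
      have hlim : Tendsto (fun n => φ (Function.update B0 i (vv a b c (σ n))) i a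
          * (φ (Function.update B0 i (vv a b c (σ n))) i b
            * φ (Function.update B0 i (vv a b c (σ n))) i c)) atTop
          (nhds (φ (Function.update B0 i (vv a b c s)) i a
            * (φ (Function.update B0 i (vv a b c s)) i b
              * φ (Function.update B0 i (vv a b c s)) i c))) :=
        (hcont i a).mul ((hcont i b).mul (hcont i c))
      have hz : φ (Function.update B0 i (vv a b c s)) i a
          * (φ (Function.update B0 i (vv a b c s)) i b
            * φ (Function.update B0 i (vv a b c s)) i c) = 0 := by
        have h2 : Tendsto (fun _ : ℕ => (0:ℝ)) atTop
            (nhds (φ (Function.update B0 i (vv a b c s)) i a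
              * (φ (Function.update B0 i (vv a b c s)) i b
                * φ (Function.update B0 i (vv a b c s)) i c))) := by
          apply hlim.congr
          intro n; rw [hzero n]
        exact tendsto_nhds_unique h2 tendsto_const_nhds
      have := mul_pos hXa (mul_pos hXb hXc)
      linarith
    · exact lemK hB hE hSP hNB hC hab hac hbc (hLn s h0 h1) hij
        (by rw [hLi s]; exact vv_rated hab hac hbc h0 h1) hm0 hm1 (hLj s) hsm
  have hprod : ∀ s : ℝ, 0 < s → s < 1 →
      φ (Function.update B0 i (vv a b c s)) i a = 0
      ∨ φ (Function.update B0 i (vv a b c s)) i b = 0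
      ∨ φ (Function.update B0 i (vv a b c s)) i c = 0 := by
    intro s h0 h1
    have := not_all_pos (lot_nonneg hB (hLn s h0 h1) i a)
      (lot_nonneg hB (hLn s h0 h1) i b) (lot_nonneg hB (hLn s h0 h1) i c)
      (hnotint s h0 h1)
    rcases mul_eq_zero.mp this with hd | hd
    · exact Or.inl hd
    rcases mul_eq_zero.mp hd with hd' | hd'
    · exact Or.inr (Or.inl hd')
    · exact Or.inr (Or.inr hd')
  -- the key ordered-pair constancy
  have key : ∀ s t : ℝ, 0 < s → s < 1 → 0 < t → t < 1 → s < t →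
      φ (Function.update B0 i (vv a b c s)) = φ (Function.update B0 i (vv a b c t)) := by
    intro s t h0s h1s h0t h1t hst
    rcases hprod s h0s h1s with hcs | hcs | hcs
    · -- a-class : a-probability is monotone decreasing, so t is in the class too
      have hta : φ (Function.update B0 i (vv a b c t)) i a = 0 := by
        have := mono_a hB hSP hab hac hbc hB0n i
          (vv_rated hab hac hbc h0s h1s) (vv_rated hab hac hbc h0t h1t)
          (vv_noties hab hac hbc h0s h1s) (vv_noties hab hac hbc h0t h1t) hst
        have hnn := lot_nonneg hB (hLn t h0t h1t) i a
        linarith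
      exact pair_of_a hB hSP hNB hab hac hbc hB0n i
        (vv_rated hab hac hbc h0s h1s) (vv_rated hab hac hbc h0t h1t)
        (vv_noties hab hac hbc h0s h1s) (vv_noties hab hac hbc h0t h1t) hcs hta
    swap
    · -- c-class
      have htc : φ (Function.update B0 i (vv a b c t)) i c = 0 := by
        have := mono_c hB hSP hab hac hbc hB0n i
          (vv_rated hab hac hbc h0s h1s) (vv_rated hab hac hbc h0t h1t)
          (vv_noties hab hac hbc h0s h1s) (vv_noties hab hac hbc h0t h1t) hst
        have hnn := lot_nonneg hB (hLn t h0t h1t) i c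
        linarith
      exact pair_of_c hB hSP hNB hab hac hbc hB0n i
        (vv_rated hab hac hbc h0s h1s) (vv_rated hab hac hbc h0t h1t)
        (vv_noties hab hac hbc h0s h1s) (vv_noties hab hac hbc h0t h1t) hcs htc
    · -- b-class at s
      rcases (lot_nonneg hB (hLn t h0t h1t) i b).eq_or_lt' with htb | htb
      · exact pair_of_b hB hSP hNB hab hac hbc hB0n i
          (vv_rated hab hac hbc h0s h1s) (vv_rated hab hac hbc h0t h1t)
          (vv_noties hab hac hbc h0s h1s) (vv_noties hab hac hbc h0t h1t)
          (by rw [hcs, ← htb])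
      -- t has positive b-probability ; use the supremum of the b-zero set
      set Zb : Set ℝ := {ρ | 0 < ρ ∧ ρ < 1 ∧ φ (Function.update B0 i (vv a b c ρ)) i b = 0}
        with hZbdef
      have hsZ : s ∈ Zb := ⟨h0s, h1s, hcs⟩
      have hZne : Zb.Nonempty := ⟨s, hsZ⟩
      have hZbdd : BddAbove Zb := ⟨1, fun ρ hρ => le_of_lt hρ.2.1⟩
      have hZinit : ∀ ρ z, z ∈ Zb → 0 < ρ → ρ ≤ z → ρ ∈ Zb := by
        intro ρ z hz h0 hle
        rcases eq_or_lt_of_le hle with rfl | hlt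
        · exact hz
        refine ⟨h0, lt_trans hlt hz.2.1, ?_⟩
        have := mono_b hB hSP hab hac hbc hB0n i
          (vv_rated hab hac hbc h0 (lt_trans hlt hz.2.1)) (vv_rated hab hac hbc hz.1 hz.2.1)
          (vv_noties hab hac hbc h0 (lt_trans hlt hz.2.1)) (vv_noties hab hac hbc hz.1 hz.2.1)
          hlt
        have hnn := lot_nonneg hB (hLn ρ h0 (lt_trans hlt hz.2.1)) i b
        have := hz.2.2
        linarith
      have hZconst : ∀ ρ ∈ Zb, φ (Function.update B0 i (vv a b c ρ))
          = φ (Function.update B0 i (vv a b c s)) := by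
        intro ρ hρ
        exact pair_of_b hB hSP hNB hab hac hbc hB0n i
          (vv_rated hab hac hbc hρ.1 hρ.2.1) (vv_rated hab hac hbc h0s h1s)
          (vv_noties hab hac hbc hρ.1 hρ.2.1) (vv_noties hab hac hbc h0s h1s)
          (by rw [hρ.2.2, hcs])
      set σ0 := sSup Zb with hσ0
      have hσ0s : s ≤ σ0 := le_csSup hZbdd hsZ
      have hσ0pos : 0 < σ0 := lt_of_lt_of_le h0s hσ0s
      have htσ : σ0 ≤ t := by
        by_contra hcon
        obtain ⟨z, hzZ, hz⟩ := exists_lt_of_lt_csSup hZne (not_le.mp hcon)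
        have hmem : t ∈ Zb := hZinit t z hzZ h0t (le_of_lt hz)
        exact absurd hmem.2.2 (ne_of_gt htb)
      have hσ01 : σ0 < 1 := lt_of_le_of_lt htσ h1t
      have hn0 : NoTiesProfile (Function.update B0 i (vv a b c σ0)) := hLn σ0 hσ0pos hσ01
      -- left limit : the allocation at σ0 equals the one at s
      have hFσ : φ (Function.update B0 i (vv a b c σ0))
          = φ (Function.update B0 i (vv a b c s)) := by
        obtain ⟨zs, hmono, hztend, hzmem⟩ := exists_seq_tendsto_sSup hZne hZbdd
        have hz01 : ∀ n, 0 < zs n ∧ zs n < 1 := fun n => ⟨(hzmem n).1, (hzmem n).2.1⟩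
        funext g x
        have hcont := cont_seq hC hab hac hbc hn0 i
          (hLi σ0) hz01 (by rw [← hσ0] at hztend; exact hztend) g x
        simp only [Function.update_idem] at hcont
        have : Tendsto (fun _ : ℕ => φ (Function.update B0 i (vv a b c s)) g x) atTop
            (nhds (φ (Function.update B0 i (vv a b c σ0)) g x)) := by
          apply hcont.congr
          intro n; rw [hZconst (zs n) (hzmem n)]
        exact tendsto_nhds_unique this tendsto_const_nhds
      rcases eq_or_lt_of_le htσ with rfl | hσt
      · exact hFσ.symm
      -- constancy strictly above σ0
      have habove : ∀ t1 t2 : ℝ, σ0 < t1 → t1 < 1 → σ0 < t2 → t2 < 1 → t1 < t2 →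
          φ (Function.update B0 i (vv a b c t1)) = φ (Function.update B0 i (vv a b c t2)) := by
        intro t1 t2 ha1 hb1 ha2 hb2 h12
        have h0t1 : 0 < t1 := lt_trans hσ0pos ha1
        have h0t2 : 0 < t2 := lt_trans hσ0pos ha2
        have hbz1 : φ (Function.update B0 i (vv a b c t1)) i b ≠ 0 := by
          intro hz
          have : t1 ∈ Zb := ⟨h0t1, hb1, hz⟩
          exact absurd (le_csSup hZbdd this) (not_le.mpr ha1)
        rcases hprod t1 h0t1 hb1 with hd | hd | hd
        · have hta : φ (Function.update B0 i (vv a b c t2)) i a = 0 := by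
            have := mono_a hB hSP hab hac hbc hB0n i
              (vv_rated hab hac hbc h0t1 hb1) (vv_rated hab hac hbc h0t2 hb2)
              (vv_noties hab hac hbc h0t1 hb1) (vv_noties hab hac hbc h0t2 hb2) h12
            have hnn := lot_nonneg hB (hLn t2 h0t2 hb2) i a
            linarith
          exact pair_of_a hB hSP hNB hab hac hbc hB0n i
            (vv_rated hab hac hbc h0t1 hb1) (vv_rated hab hac hbc h0t2 hb2)
            (vv_noties hab hac hbc h0t1 hb1) (vv_noties hab hac hbc h0t2 hb2) hd hta
        · exact absurd hd hbz1
        · have htc : φ (Function.update B0 i (vv a b c t2)) i c = 0 := by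
            have := mono_c hB hSP hab hac hbc hB0n i
              (vv_rated hab hac hbc h0t1 hb1) (vv_rated hab hac hbc h0t2 hb2)
              (vv_noties hab hac hbc h0t1 hb1) (vv_noties hab hac hbc h0t2 hb2) h12
            have hnn := lot_nonneg hB (hLn t2 h0t2 hb2) i c
            linarith
          exact pair_of_c hB hSP hNB hab hac hbc hB0n i
            (vv_rated hab hac hbc h0t1 hb1) (vv_rated hab hac hbc h0t2 hb2)
            (vv_noties hab hac hbc h0t1 hb1) (vv_noties hab hac hbc h0t2 hb2) hd htc
      -- right limit : the allocation at σ0 equals the one at t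
      have hFσ' : φ (Function.update B0 i (vv a b c σ0))
          = φ (Function.update B0 i (vv a b c t)) := by
        set τ : ℕ → ℝ := seqd σ0 t with hτ
        have hτmem : ∀ n, σ0 < τ n ∧ τ n < t := fun n => seqd_mem hσt n
        have hτ01 : ∀ n, 0 < τ n ∧ τ n < 1 :=
          fun n => ⟨lt_trans hσ0pos (hτmem n).1, lt_trans (hτmem n).2 h1t⟩
        have hτtend : Tendsto τ atTop (nhds σ0) := seqd_tendsto σ0 t
        funext g x
        have hcont := cont_seq hC hab hac hbc hn0 i (hLi σ0) hτ01 hτtend g x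
        simp only [Function.update_idem] at hcont
        have : Tendsto (fun _ : ℕ => φ (Function.update B0 i (vv a b c t)) g x) atTop
            (nhds (φ (Function.update B0 i (vv a b c σ0)) g x)) := by
          apply hcont.congr
          intro n
          rw [habove (τ n) t (hτmem n).1 (hτ01 n).2 hσt h1t (hτmem n).2]
        exact tendsto_nhds_unique this tendsto_const_nhds
      rw [← hFσ, hFσ']
  rcases lt_trichotomy s1 s2 with hlt | rfl | hgt
  · exact key s1 s2 h10 h11 h20 h21 hlt
  · rfl
  · exact (key s2 s1 h20 h21 h10 h11 hgt).symm

end Line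
end S8
end
open S8 in
theorem stmt8 (φ : (Fin 3 → Fin 3 → ℝ) → Fin 3 → Fin 3 → ℝ)
    (hB : BistochasticValued φ) (hE : Efficient φ) (hSP : StrategyProof φ)
    (hNB : NonBossy φ) (hC : NCContinuous φ)
    (u : Fin 3 → Fin 3 → ℝ) (hu : NoTiesProfile u)
    (i j : Fin 3) (hij : i ≠ j) (hord : SameOrder (u i) (u j))
    (a b c : Fin 3) (hab : a ≠ b) (hac : a ≠ c) (hbc : b ≠ c)
    (h1 : u i a > u i b) (h2 : u i b > u i c)
    (ui' : Fin 3 → ℝ) (hui' : NoTies ui') (hsame : SameOrder ui' (u i))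
    (hpos : φ u i b + φ u j b > 0) :
    φ (Function.update u i ui') = φ u ∧
    (φ u i a + φ u i b = 1 ∨ φ u i b + φ u i c = 1) ∧
    (φ u j a + φ u j b = 1 ∨ φ u j b + φ u j c = 1) := by
  classical
  have hja : u j b < u j a := (hord a b).mp h1
  have hjb : u j c < u j b := (hord b c).mp h2
  have hua : ui' b < ui' a := (hsame a b).mpr h1
  have hub : ui' c < ui' b := (hsame b c).mpr h2
  -- rates
  have hrj : Rated a b c (u j) ((u j b - u j c) / (u j a - u j c)) := rated_of_order hja hjb
  obtain ⟨hmj0, hmj1⟩ := rated_bounds hrj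
  have hri : Rated a b c (u i) ((u i b - u i c) / (u i a - u i c)) := rated_of_order h1 h2
  obtain ⟨hμ0, hμ1⟩ := rated_bounds hri
  have hrt : Rated a b c ui' ((ui' b - ui' c) / (ui' a - ui' c)) := rated_of_order hua hub
  obtain ⟨ht'0, ht'1⟩ := rated_bounds hrt
  set mj : ℝ := (u j b - u j c) / (u j a - u j c)
  set μ : ℝ := (u i b - u i c) / (u i a - u i c)
  set t' : ℝ := (ui' b - ui' c) / (ui' a - ui' c)
  -- the base profile with j on the grid
  set B0 := Function.update u j (vv a b c mj) with hB0def
  have hB0n : NoTiesProfile B0 := noties_update hu (vv_noties hab hac hbc hmj0 hmj1)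
  have hB0j : B0 j = vv a b c mj := Function.update_self ..
  have hB0i : B0 i = u i := Function.update_of_ne hij _ _
  have hinvj : φ B0 = φ u := inv_lemma hB hSP hNB hC hab hac hbc hu j hrj
  have hinvi : φ (Function.update B0 i (vv a b c μ)) = φ B0 :=
    inv_lemma hB hSP hNB hC hab hac hbc hB0n i (by rw [hB0i]; exact hri)
  have hP'n : NoTiesProfile (Function.update u i ui') := noties_update hu hui'
  have hswap : Function.update (Function.update u i ui') j (vv a b c mj)
      = Function.update B0 i ui' := by
    rw [hB0def, Function.update_comm hij]
  have hinvj' : φ (Function.update B0 i ui') = φ (Function.update u i ui') := by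
    rw [← hswap]
    exact inv_lemma hB hSP hNB hC hab hac hbc hP'n j
      (by rw [Function.update_of_ne (Ne.symm hij)]; exact hrj)
  have hBiun : NoTiesProfile (Function.update B0 i ui') := noties_update hB0n hui'
  have hinvi' : φ (Function.update B0 i (vv a b c t')) = φ (Function.update B0 i ui') := by
    have := inv_lemma hB hSP hNB hC hab hac hbc hBiun i
      (by rw [Function.update_self]; exact hrt)
    rwa [Function.update_idem] at this
  -- the whole line is constant
  have hline : ∀ s : ℝ, 0 < s → s < 1 → φ (Function.update B0 i (vv a b c s)) = φ u := by
    intro s h0 h1'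
    have := line_const hB hE hSP hNB hC hab hac hbc hB0n hij hmj0 hmj1 hB0j h0 h1' hμ0 hμ1
    rw [this, hinvi, hinvj]
  -- invariance conclusion
  have hG1 : φ (Function.update u i ui') = φ u := by
    rw [← hinvj', ← hinvi', hline t' ht'0 ht'1]
  refine ⟨hG1, ?_⟩
  -- corner structure
  have hsumi := lot_sum hB hab hac hbc hu i
  have hsumj := lot_sum hB hab hac hbc hu j
  have hGi : φ u i a = 0 ∨ φ u i c = 0 := by
    rcases (lot_nonneg hB hu i b).eq_or_lt' with hb0 | hbpos
    · -- i gets no b : then j gets b with positive probability ; trade above mj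
      have hjbpos : 0 < φ u j b := by linarith
      set s1 : ℝ := (mj + 1) / 2 with hs1def
      have hs10 : 0 < s1 := by rw [hs1def]; linarith
      have hs11 : s1 < 1 := by rw [hs1def]; linarith
      have hs1m : mj < s1 := by rw [hs1def]; linarith
      have hQ := hline s1 hs10 hs11
      have hQn : NoTiesProfile (Function.update B0 i (vv a b c s1)) :=
        noties_update hB0n (vv_noties hab hac hbc hs10 hs11)
      have htr := trade hB hE hab hac hbc hQn hij
        (by rw [Function.update_self]; exact vv_rated hab hac hbc hs10 hs11)
        (by rw [Function.update_of_ne (Ne.symm hij), hB0j]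
            exact vv_rated hab hac hbc hmj0 hmj1)
        hs1m
      rw [hQ] at htr
      have := not_both_pos (lot_nonneg hB hu i a) (lot_nonneg hB hu i c)
        (fun hcon => htr ⟨hcon.1, hcon.2, hjbpos⟩)
      rcases mul_eq_zero.mp this with hd | hd
      exacts [Or.inl hd, Or.inr hd]
    · -- i gets some b : the line is nowhere fully interior ; use a point below mj
      set s0 : ℝ := mj / 2 with hs0def
      have hs00 : 0 < s0 := by rw [hs0def]; linarith
      have hs01 : s0 < 1 := by rw [hs0def]; linarith
      have hs0m : s0 < mj := by rw [hs0def]; linarith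
      have hQ := hline s0 hs00 hs01
      have hQn : NoTiesProfile (Function.update B0 i (vv a b c s0)) :=
        noties_update hB0n (vv_noties hab hac hbc hs00 hs01)
      have hni := lemAlpha hB hE hSP hNB hC hab hac hbc hQn hij hs00 hs01
        (Function.update_self ..) hmj0 hmj1
        (by rw [Function.update_of_ne (Ne.symm hij), hB0j])
        hs0m
      rw [hQ] at hni
      rcases (lot_nonneg hB hu i a).eq_or_lt' with ha0 | hapos
      · exact Or.inl ha0
      rcases (lot_nonneg hB hu i c).eq_or_lt' with hc0 | hcpos
      · exact Or.inr hc0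
      exact absurd ⟨hapos, hbpos, hcpos⟩ hni
  constructor
  · rcases hGi with hd | hd
    · right; linarith
    · left; linarith
  · rcases (lot_nonneg hB hu i b).eq_or_lt' with hb0 | hbpos
    · -- i gets no b : its lottery is degenerate, columns pin j
      rcases hGi with hd | hd
      · -- φ u i = δ_c
        have hic : φ u i c = 1 := by linarith
        have hcp := col_pair hB hu hij c
        have hjc : φ u j c = 0 := by
          have := lot_nonneg hB hu j c
          linarith
        left; linarith
      · -- φ u i = δ_a
        have hia : φ u i a = 1 := by linarith
        have hcp := col_pair hB hu hij a
        have hja' : φ u j a = 0 := by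
          have := lot_nonneg hB hu j a
          linarith
        right; linarith
    · -- i gets some b : trade below mj pins j's lottery
      set s0 : ℝ := mj / 2 with hs0def
      have hs00 : 0 < s0 := by rw [hs0def]; linarith
      have hs01 : s0 < 1 := by rw [hs0def]; linarith
      have hs0m : s0 < mj := by rw [hs0def]; linarith
      have hQ := hline s0 hs00 hs01
      have hQn : NoTiesProfile (Function.update B0 i (vv a b c s0)) :=
        noties_update hB0n (vv_noties hab hac hbc hs00 hs01)
      have htr := trade hB hE hab hac hbc hQn (Ne.symm hij)
        (by rw [Function.update_of_ne (Ne.symm hij), hB0j]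
            exact vv_rated hab hac hbc hmj0 hmj1)
        (by rw [Function.update_self]; exact vv_rated hab hac hbc hs00 hs01)
        hs0m
      rw [hQ] at htr
      have := not_both_pos (lot_nonneg hB hu j a) (lot_nonneg hB hu j c)
        (fun hcon => htr ⟨hcon.1, hcon.2, hbpos⟩)
      rcases mul_eq_zero.mp this with hd | hd
      · right; linarith
      · left; linarith
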